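/- Let (u₁, v₁), (u₂, v₂) ∈ ℂ² and let M be the complex 2 × 2 matrix with these rows. Then the smallest singular value of M satisfies σ_min(M)² = ½·(‖a₁‖ + ‖a₂‖ − ‖a₁ + a₂‖), where a₁ = H(u₁, v₁) and a₂ = H(u₂, v₂) are Hopf images in ℝ³. Equivalently, the minimum over unit vectors (u, v) ∈ ℂ² of |u₁·conj(u) + v₁·conj(v)|² + |u₂·conj(u) + v₂·conj(v)|² equals ½·(‖a₁‖ + ‖a₂‖ − ‖a₁ + a₂‖). -/

import Mathlib

open Complex

/-- The Hopf map `ℂ² → ℝ³`: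
`H(u, v) = (2 Re(conj u * v), −2 Im(conj u * v), |u|² − |v|²)`. -/
noncomputable def hopfMap (u v : ℂ) : EuclideanSpace ℝ (Fin 3) :=
  (WithLp.equiv 2 (Fin 3 → ℝ)).symm
    ![2 * ((starRingEnd ℂ) u * v).re, -2 * ((starRingEnd ℂ) u * v).im,
      ‖u‖ ^ 2 - ‖v‖ ^ 2]

lemma hopf_norm (u v : ℂ) : ‖hopfMap u v‖ = ‖u‖ ^ 2 + ‖v‖ ^ 2 := by
  have h : ‖hopfMap u v‖ = Real.sqrt (∑ i, (hopfMap u v i)^2) := by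
    rw [EuclideanSpace.norm_eq]
    congr 1; apply Finset.sum_congr rfl; intro i _; rw [Real.norm_eq_abs, _root_.sq_abs]
  rw [h]
  have : ∑ i, (hopfMap u v i)^2 = (‖u‖ ^ 2 + ‖v‖ ^ 2)^2 := by
    simp only [hopfMap, Fin.sum_univ_three]
    simp only [WithLp.equiv_symm_apply, PiLp.toLp_apply, Matrix.cons_val_zero, Matrix.cons_val_one,
      Matrix.head_cons, Matrix.cons_val_two, Matrix.tail_cons]
    simp only [Complex.sq_norm, Complex.normSq_apply, Complex.mul_re, Complex.mul_im,
      Complex.conj_re, Complex.conj_im]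
    ring
  rw [this, Real.sqrt_sq (by positivity)]

lemma hopf_add_norm_sq (u₁ v₁ u₂ v₂ : ℂ) :
    ‖hopfMap u₁ v₁ + hopfMap u₂ v₂‖ ^ 2 =
      ((normSq u₁ + normSq u₂) - (normSq v₁ + normSq v₂))^2
        + 4 * normSq (u₁ * (starRingEnd ℂ) v₁ + u₂ * (starRingEnd ℂ) v₂) := by
  have h : ‖hopfMap u₁ v₁ + hopfMap u₂ v₂‖^2 = ∑ i, ((hopfMap u₁ v₁ + hopfMap u₂ v₂) i)^2 := by
    rw [EuclideanSpace.norm_eq, Real.sq_sqrt (by positivity)]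
    apply Finset.sum_congr rfl; intro i _; rw [Real.norm_eq_abs, _root_.sq_abs]
  rw [h]
  simp only [hopfMap, Fin.sum_univ_three, PiLp.add_apply]
  simp only [WithLp.equiv_symm_apply, PiLp.toLp_apply, Matrix.cons_val_zero, Matrix.cons_val_one,
    Matrix.head_cons, Matrix.cons_val_two, Matrix.tail_cons]
  simp only [Complex.sq_norm, Complex.normSq_apply, Complex.mul_re, Complex.mul_im,
    Complex.add_re, Complex.add_im, Complex.conj_re, Complex.conj_im]
  ring

lemma lagrange (p₁ p₂ r₁ r₂ : ℂ) :
    (normSq p₁ + normSq p₂) * (normSq r₁ + normSq r₂)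
      = normSq (p₁ * (starRingEnd ℂ) r₁ + p₂ * (starRingEnd ℂ) r₂)
        + normSq (p₁ * r₂ - p₂ * r₁) := by
  simp only [Complex.normSq_apply, Complex.mul_re, Complex.mul_im, Complex.add_re,
    Complex.add_im, Complex.sub_re, Complex.sub_im, Complex.conj_re, Complex.conj_im]
  ring

lemma rot_sum (u₁ v₁ u₂ v₂ u v : ℂ) :
    normSq (u₁ * (starRingEnd ℂ) u + v₁ * (starRingEnd ℂ) v) + normSq (v₁ * u - u₁ * v)
      + (normSq (u₂ * (starRingEnd ℂ) u + v₂ * (starRingEnd ℂ) v) + normSq (v₂ * u - u₂ * v))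
      = ((normSq u₁ + normSq u₂) + (normSq v₁ + normSq v₂)) * (normSq u + normSq v) := by
  simp only [Complex.normSq_apply, Complex.mul_re, Complex.mul_im, Complex.add_re,
    Complex.add_im, Complex.sub_re, Complex.sub_im, Complex.conj_re, Complex.conj_im]
  ring

lemma det_rot (u₁ v₁ u₂ v₂ u v : ℂ) :
    normSq ((u₁ * (starRingEnd ℂ) u + v₁ * (starRingEnd ℂ) v) * (v₂ * u - u₂ * v)
        - (u₂ * (starRingEnd ℂ) u + v₂ * (starRingEnd ℂ) v) * (v₁ * u - u₁ * v))
      = normSq (u₁ * v₂ - v₁ * u₂) * (normSq u + normSq v)^2 := by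
  simp only [Complex.normSq_apply, Complex.mul_re, Complex.mul_im, Complex.add_re,
    Complex.add_im, Complex.sub_re, Complex.sub_im, Complex.conj_re, Complex.conj_im]
  ring

lemma det_lagrange (u₁ v₁ u₂ v₂ : ℂ) :
    (normSq u₁ + normSq u₂) * (normSq v₁ + normSq v₂)
        - normSq (u₁ * (starRingEnd ℂ) v₁ + u₂ * (starRingEnd ℂ) v₂)
      = normSq (u₁ * v₂ - v₁ * u₂) := by
  simp only [Complex.normSq_apply, Complex.mul_re, Complex.mul_im, Complex.add_re,
    Complex.add_im, Complex.sub_re, Complex.sub_im, Complex.conj_re, Complex.conj_im]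
  ring

lemma key_identity (u₁ v₁ u₂ v₂ : ℂ) (lam : ℝ)
    (hchar : ((normSq u₁ + normSq u₂) - lam) * ((normSq v₁ + normSq v₂) - lam)
        = normSq (u₁ * (starRingEnd ℂ) v₁ + u₂ * (starRingEnd ℂ) v₂)) :
    normSq (u₁ * (starRingEnd ℂ) (u₁ * (starRingEnd ℂ) v₁ + u₂ * (starRingEnd ℂ) v₂)
        + v₁ * (((lam - (normSq u₁ + normSq u₂) : ℝ) : ℂ)))
      + normSq (u₂ * (starRingEnd ℂ) (u₁ * (starRingEnd ℂ) v₁ + u₂ * (starRingEnd ℂ) v₂)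
        + v₂ * (((lam - (normSq u₁ + normSq u₂) : ℝ) : ℂ)))
      = lam * (normSq (u₁ * (starRingEnd ℂ) v₁ + u₂ * (starRingEnd ℂ) v₂)
          + (lam - (normSq u₁ + normSq u₂))^2) := by
  simp only [Complex.normSq_apply, Complex.mul_re, Complex.mul_im, Complex.add_re,
    Complex.add_im, Complex.sub_re, Complex.sub_im, Complex.conj_re, Complex.conj_im,
    Complex.ofReal_re, Complex.ofReal_im] at hchar ⊢
  linear_combination
    ((u₁.re * u₁.re + u₁.im * u₁.im + (u₂.re * u₂.re + u₂.im * u₂.im)) - lam) * hchar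

lemma mem_helper (u₁ v₁ u₂ v₂ u v : ℂ) (n lam : ℝ) (hn : 0 < n)
    (h1 : ‖u‖ ^ 2 + ‖v‖ ^ 2 = n ^ 2)
    (h2 : ‖u₁ * (starRingEnd ℂ) u + v₁ * (starRingEnd ℂ) v‖ ^ 2
        + ‖u₂ * (starRingEnd ℂ) u + v₂ * (starRingEnd ℂ) v‖ ^ 2 = lam * n ^ 2) :
    lam ∈ { t : ℝ | ∃ u v : ℂ, ‖u‖ ^ 2 + ‖v‖ ^ 2 = 1 ∧
          t = ‖u₁ * (starRingEnd ℂ) u + v₁ * (starRingEnd ℂ) v‖ ^ 2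
            + ‖u₂ * (starRingEnd ℂ) u + v₂ * (starRingEnd ℂ) v‖ ^ 2 } := by
  have habsn : ‖(n:ℂ)‖ = n := by rw [Complex.norm_real, Real.norm_eq_abs, abs_of_pos hn]
  refine ⟨u / n, v / n, ?_, ?_⟩
  · rw [norm_div, norm_div, habsn, div_pow, div_pow, ← add_div, h1,
      div_self (by positivity)]
  · have e1 : u₁ * (starRingEnd ℂ) (u / n) + v₁ * (starRingEnd ℂ) (v / n)
        = (u₁ * (starRingEnd ℂ) u + v₁ * (starRingEnd ℂ) v) / n := by
      rw [map_div₀, map_div₀, Complex.conj_ofReal]; ring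
    have e2 : u₂ * (starRingEnd ℂ) (u / n) + v₂ * (starRingEnd ℂ) (v / n)
        = (u₂ * (starRingEnd ℂ) u + v₂ * (starRingEnd ℂ) v) / n := by
      rw [map_div₀, map_div₀, Complex.conj_ofReal]; ring
    rw [e1, e2, norm_div, norm_div, habsn, div_pow, div_pow, ← add_div, h2]
    field_simp

lemma min_bound (tq Q S D : ℝ) (hS0 : 0 ≤ S) (hS2 : S^2 = (tq + Q)^2 - 4*D)
    (hd : D ≤ tq * Q) :
    (1/2) * ((tq + Q) - S) ≤ tq := by
  nlinarith [hd, hS0, sq_nonneg (Q - tq - S)]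

theorem sigma_min_sq_eq_hopf (u₁ v₁ u₂ v₂ : ℂ) :
    IsLeast
      { t : ℝ | ∃ u v : ℂ, ‖u‖ ^ 2 + ‖v‖ ^ 2 = 1 ∧
          t = ‖u₁ * (starRingEnd ℂ) u + v₁ * (starRingEnd ℂ) v‖ ^ 2
            + ‖u₂ * (starRingEnd ℂ) u + v₂ * (starRingEnd ℂ) v‖ ^ 2 }
      ((1 / 2) * (‖hopfMap u₁ v₁‖ + ‖hopfMap u₂ v₂‖
        - ‖hopfMap u₁ v₁ + hopfMap u₂ v₂‖)) := by
  have hT : ‖hopfMap u₁ v₁‖ + ‖hopfMap u₂ v₂‖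
      = (normSq u₁ + normSq u₂) + (normSq v₁ + normSq v₂) := by
    rw [hopf_norm, hopf_norm]; simp only [Complex.sq_norm]; ring
  rw [hT]
  set S : ℝ := ‖hopfMap u₁ v₁ + hopfMap u₂ v₂‖ with hSdef
  have hS0 : 0 ≤ S := norm_nonneg _
  have hS2 : S ^ 2 = ((normSq u₁ + normSq u₂) - (normSq v₁ + normSq v₂)) ^ 2
      + 4 * normSq (u₁ * (starRingEnd ℂ) v₁ + u₂ * (starRingEnd ℂ) v₂) :=
    hopf_add_norm_sq u₁ v₁ u₂ v₂
  constructor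
  · -- membership
    by_cases hb : (u₁ * (starRingEnd ℂ) v₁ + u₂ * (starRingEnd ℂ) v₂) = 0
    · have hnB : normSq (u₁ * (starRingEnd ℂ) v₁ + u₂ * (starRingEnd ℂ) v₂) = 0 := by
        rw [hb]; simp
      have h' : S ^ 2 = |(normSq u₁ + normSq u₂) - (normSq v₁ + normSq v₂)| ^ 2 := by
        rw [_root_.sq_abs]; linarith
      have hS : S = |(normSq u₁ + normSq u₂) - (normSq v₁ + normSq v₂)| := by
        rw [← Real.sqrt_sq hS0, h', Real.sqrt_sq (abs_nonneg _)]
      rcases le_total (normSq u₁ + normSq u₂) (normSq v₁ + normSq v₂) with hac | hac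
      · have hlam : (1/2) * ((normSq u₁ + normSq u₂) + (normSq v₁ + normSq v₂) - S)
            = normSq u₁ + normSq u₂ := by
          rw [hS, abs_of_nonpos (by linarith)]; ring
        rw [hlam]
        exact ⟨1, 0, by simp, by simp [Complex.sq_norm]⟩
      · have hlam : (1/2) * ((normSq u₁ + normSq u₂) + (normSq v₁ + normSq v₂) - S)
            = normSq v₁ + normSq v₂ := by
          rw [hS, _root_.abs_of_nonneg (by linarith)]; ring
        rw [hlam]
        exact ⟨0, 1, by simp, by simp [Complex.sq_norm]⟩
    · have hbpos : 0 < normSq (u₁ * (starRingEnd ℂ) v₁ + u₂ * (starRingEnd ℂ) v₂) :=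
        normSq_pos.2 hb
      set lam : ℝ := (1/2) * ((normSq u₁ + normSq u₂) + (normSq v₁ + normSq v₂) - S) with hlam
      have hchar : ((normSq u₁ + normSq u₂) - lam) * ((normSq v₁ + normSq v₂) - lam)
          = normSq (u₁ * (starRingEnd ℂ) v₁ + u₂ * (starRingEnd ℂ) v₂) := by
        rw [hlam]; linear_combination (1/4) * hS2
      have hm2 : 0 < normSq (u₁ * (starRingEnd ℂ) v₁ + u₂ * (starRingEnd ℂ) v₂)
          + (lam - (normSq u₁ + normSq u₂)) ^ 2 := by positivity
      have hn : 0 < Real.sqrt (normSq (u₁ * (starRingEnd ℂ) v₁ + u₂ * (starRingEnd ℂ) v₂)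
          + (lam - (normSq u₁ + normSq u₂)) ^ 2) := Real.sqrt_pos.2 hm2
      have hn2 : (Real.sqrt (normSq (u₁ * (starRingEnd ℂ) v₁ + u₂ * (starRingEnd ℂ) v₂)
          + (lam - (normSq u₁ + normSq u₂)) ^ 2)) ^ 2
          = normSq (u₁ * (starRingEnd ℂ) v₁ + u₂ * (starRingEnd ℂ) v₂)
            + (lam - (normSq u₁ + normSq u₂)) ^ 2 := Real.sq_sqrt hm2.le
      apply mem_helper u₁ v₁ u₂ v₂ (u₁ * (starRingEnd ℂ) v₁ + u₂ * (starRingEnd ℂ) v₂)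
        (((lam - (normSq u₁ + normSq u₂) : ℝ)) : ℂ) _ lam hn
      · rw [Complex.sq_norm, Complex.norm_real, Real.norm_eq_abs, _root_.sq_abs, hn2]
      · rw [hn2, Complex.sq_norm, Complex.sq_norm]
        simp only [Complex.conj_ofReal]
        exact key_identity u₁ v₁ u₂ v₂ lam hchar
  · -- lower bound
    rintro t ⟨u, v, hu, htq⟩
    have hu' : normSq u + normSq v = 1 := by
      rw [← Complex.sq_norm, ← Complex.sq_norm]; exact hu
    have htq' : t = normSq (u₁ * (starRingEnd ℂ) u + v₁ * (starRingEnd ℂ) v)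
        + normSq (u₂ * (starRingEnd ℂ) u + v₂ * (starRingEnd ℂ) v) := by
      rw [htq, Complex.sq_norm, Complex.sq_norm]
    have hA := rot_sum u₁ v₁ u₂ v₂ u v
    have hL := lagrange (u₁ * (starRingEnd ℂ) u + v₁ * (starRingEnd ℂ) v)
      (u₂ * (starRingEnd ℂ) u + v₂ * (starRingEnd ℂ) v) (v₁ * u - u₁ * v) (v₂ * u - u₂ * v)
    have hDet := det_rot u₁ v₁ u₂ v₂ u v
    have hDL := det_lagrange u₁ v₁ u₂ v₂
    rw [hu'] at hA hDet
    have hq : t + (normSq (v₁ * u - u₁ * v) + normSq (v₂ * u - u₂ * v))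
        = (normSq u₁ + normSq u₂) + (normSq v₁ + normSq v₂) := by
      rw [htq']; linarith [hA]
    have hd : normSq (u₁ * v₂ - v₁ * u₂)
        ≤ t * (normSq (v₁ * u - u₁ * v) + normSq (v₂ * u - u₂ * v)) := by
      rw [htq']
      nlinarith [normSq_nonneg ((u₁ * (starRingEnd ℂ) u + v₁ * (starRingEnd ℂ) v)
          * (starRingEnd ℂ) (v₁ * u - u₁ * v)
        + (u₂ * (starRingEnd ℂ) u + v₂ * (starRingEnd ℂ) v)
          * (starRingEnd ℂ) (v₂ * u - u₂ * v)), hL, hDet]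
    have hS2' : S ^ 2 = ((normSq u₁ + normSq u₂) + (normSq v₁ + normSq v₂)) ^ 2
        - 4 * normSq (u₁ * v₂ - v₁ * u₂) := by
      linear_combination hS2 - 4 * hDL
    rw [← hq] at hS2' ⊢
    exact min_bound t (normSq (v₁ * u - u₁ * v) + normSq (v₂ * u - u₂ * v)) S
      (normSq (u₁ * v₂ - v₁ * u₂)) hS0 hS2' hd
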